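/- Consider the planar system dv/dt = η(κ_r + α)v + ω̃Jv + ηK v − (ηα/w)‖v‖²v + ηY v_g in ℝ², written abstractly as dv/dt = F(v) with equilibrium v_s (F(v_s) = 0), where F(v) = M v + ηY v_g − (ηα/w)‖v‖²v and M = ω_Δ J + η(S* − Y_φ) + ηα I₂ is a real 2×2 matrix of the form c I₂ + d J with c = η(κ_r + α). Define V(v) = (1/(2η))‖v − v_s‖². Then along trajectories, dV/dt ≤ (κ_r + α − (α/(2w))‖v_s‖²)‖v − v_s‖². In particular, if κ_r + α < (α/(2w))‖v_s‖² then v_s is globally asymptotically stable. -/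

import Mathlib

private lemma droop_hasDerivAt_sq_abs (f : ℝ → ℂ) (f' : ℂ) (t : ℝ) (hf : HasDerivAt f f' t) :
    HasDerivAt (fun s => ‖f s‖ ^ 2)
      (2 * ((f t).re * f'.re + (f t).im * f'.im)) t := by
  have hre : HasDerivAt (fun s => (f s).re) f'.re t :=
    Complex.reCLM.hasFDerivAt.comp_hasDerivAt t hf
  have him : HasDerivAt (fun s => (f s).im) f'.im t :=
    Complex.imCLM.hasFDerivAt.comp_hasDerivAt t hf
  have h := (hre.mul hre).add (him.mul him)
  have hfun : (fun s => ‖f s‖ ^ 2)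
      = fun s => (f s).re * (f s).re + (f s).im * (f s).im := by
    funext s; rw [Complex.sq_norm, Complex.normSq_apply]
  rw [hfun]
  exact h.congr_deriv (by ring)

private lemma droop_bound (c d k : ℝ) (hk : 0 ≤ k) (x y : ℂ) (e' : ℂ)
    (he' : e' = ((c : ℂ) + (d : ℂ) * Complex.I) * (x - y)
      - (k : ℂ) * (((‖x‖ : ℝ) : ℂ) ^ 2 * x - ((‖y‖ : ℝ) : ℂ) ^ 2 * y)) :
    2 * ((x - y).re * e'.re + (x - y).im * e'.im)
      ≤ (2 * c - k * ‖y‖ ^ 2) * ‖x - y‖ ^ 2 := by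
  have hax : (‖x‖ : ℝ) ^ 2 = x.re ^ 2 + x.im ^ 2 := by
    rw [Complex.sq_norm, Complex.normSq_apply]; ring
  have hay : (‖y‖ : ℝ) ^ 2 = y.re ^ 2 + y.im ^ 2 := by
    rw [Complex.sq_norm, Complex.normSq_apply]; ring
  have haxy : (‖x - y‖ : ℝ) ^ 2 = (x.re - y.re) ^ 2 + (x.im - y.im) ^ 2 := by
    rw [Complex.sq_norm, Complex.normSq_apply]; simp [Complex.sub_re, Complex.sub_im]; ring
  have hre : e'.re = c * (x.re - y.re) - d * (x.im - y.im)
      - k * ((x.re ^ 2 + x.im ^ 2) * x.re - (y.re ^ 2 + y.im ^ 2) * y.re) := by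
    rw [he']
    simp [Complex.mul_re, Complex.mul_im, Complex.sub_re, Complex.sub_im, Complex.add_re,
      Complex.add_im, ← Complex.ofReal_pow, hax, hay]
  have him : e'.im = c * (x.im - y.im) + d * (x.re - y.re)
      - k * ((x.re ^ 2 + x.im ^ 2) * x.im - (y.re ^ 2 + y.im ^ 2) * y.im) := by
    rw [he']
    simp [Complex.mul_re, Complex.mul_im, Complex.sub_re, Complex.sub_im, Complex.add_re,
      Complex.add_im, ← Complex.ofReal_pow, hax, hay]
  rw [hre, him, hay, haxy, Complex.sub_re, Complex.sub_im]
  set a := x.re; set b := x.im; set p := y.re; set q := y.im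
  nlinarith [mul_nonneg hk (sq_nonneg (a*q - b*p)),
    mul_nonneg hk (sq_nonneg (a^2 + b^2 - p^2 - q^2)),
    mul_nonneg hk (sq_nonneg (a^2 + b^2 - a*p - b*q))]

/-- Theorem 1: Lyapunov decrease and global asymptotic stability for complex droop
control, with the plane `ℝ²` identified with `ℂ` (so that `J` is multiplication by `I`
and `c I₂ + d J` is multiplication by `c + d i`). -/
theorem complex_droop_global_stability (η α w κr ωΔ : ℝ) (hη : 0 < η) (hα : 0 < α)
    (hw : 0 < w) (g vs : ℂ)
    (F : ℂ → ℂ)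
    (hF : ∀ z : ℂ, F z = ((η * (κr + α) : ℝ) + (ωΔ : ℝ) * Complex.I) * z + g
      - ((η * α / w : ℝ) : ℂ) * ((‖z‖ : ℝ) : ℂ) ^ 2 * z)
    (heq : F vs = 0)
    (v : ℝ → ℂ) (hv : ∀ t : ℝ, HasDerivAt v (F (v t)) t) :
    (∀ t : ℝ, ∃ D : ℝ,
      HasDerivAt (fun s => (1 / (2 * η)) * ‖v s - vs‖ ^ 2) D t ∧
      D ≤ (κr + α - (α / (2 * w)) * ‖vs‖ ^ 2) * ‖v t - vs‖ ^ 2) ∧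
    (κr + α < (α / (2 * w)) * ‖vs‖ ^ 2 →
      Filter.Tendsto v Filter.atTop (nhds vs)) := by
  set c₀ : ℝ := κr + α - (α / (2 * w)) * ‖vs‖ ^ 2 with hc₀
  have hk : (0:ℝ) ≤ η * α / w := le_of_lt (div_pos (mul_pos hη hα) hw)
  -- F in equilibrium-subtracted form
  have hFx : ∀ x : ℂ, F x = (((η * (κr + α) : ℝ) : ℂ) + ((ωΔ : ℝ) : ℂ) * Complex.I) * (x - vs)
      - ((η * α / w : ℝ) : ℂ) * (((‖x‖ : ℝ) : ℂ) ^ 2 * x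
        - ((‖vs‖ : ℝ) : ℂ) ^ 2 * vs) := by
    intro x
    have h2 := heq
    rw [hF vs] at h2
    rw [hF x]
    linear_combination h2
  -- Derivative of the squared distance, with bound
  set G : ℝ → ℝ := fun t =>
    2 * ((v t - vs).re * (F (v t)).re + (v t - vs).im * (F (v t)).im) with hG
  have hg : ∀ t : ℝ, HasDerivAt (fun s => ‖v s - vs‖ ^ 2) (G t) t := by
    intro t
    have := droop_hasDerivAt_sq_abs (fun s => v s - vs) (F (v t)) t ((hv t).sub_const vs)
    simpa [hG] using this
  have hGle : ∀ t : ℝ, G t ≤ (2 * η * c₀) * ‖v t - vs‖ ^ 2 := by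
    intro t
    have hb := droop_bound (η * (κr + α)) ωΔ (η * α / w) hk (v t) vs (F (v t)) (hFx (v t))
    have heqc : 2 * (η * (κr + α)) - (η * α / w) * ‖vs‖ ^ 2 = 2 * η * c₀ := by
      rw [hc₀]; field_simp
    rw [heqc] at hb
    exact hb
  constructor
  · intro t
    refine ⟨(1 / (2 * η)) * G t, (hg t).const_mul _, ?_⟩
    have h2η : (0:ℝ) < 1 / (2 * η) := by positivity
    have := mul_le_mul_of_nonneg_left (hGle t) (le_of_lt h2η)
    calc (1 / (2 * η)) * G t ≤ (1 / (2 * η)) * ((2 * η * c₀) * ‖v t - vs‖ ^ 2) := this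
      _ = c₀ * ‖v t - vs‖ ^ 2 := by field_simp
  · intro hlt
    set lam : ℝ := 2 * η * c₀ with hlam
    have hlamneg : lam < 0 := by
      have : c₀ < 0 := by rw [hc₀]; linarith
      have := mul_pos (by linarith : (0:ℝ) < 2 * η) (neg_pos.mpr this)
      nlinarith
    set gg : ℝ → ℝ := fun s => ‖v s - vs‖ ^ 2 with hgg
    set h : ℝ → ℝ := fun s => gg s * Real.exp (-lam * s) with hh
    have hhderiv : ∀ t : ℝ, HasDerivAt h
        (G t * Real.exp (-lam * t) + gg t * (Real.exp (-lam * t) * (-lam))) t := by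
      intro t
      have hexp : HasDerivAt (fun s => Real.exp (-lam * s)) (Real.exp (-lam * t) * (-lam)) t := by
        simpa using ((hasDerivAt_id t).const_mul (-lam)).exp
      exact (hg t).mul hexp
    have hanti : Antitone h := by
      apply antitone_of_deriv_nonpos
      · intro t; exact (hhderiv t).differentiableAt
      · intro t
        rw [(hhderiv t).deriv]
        have hb := hGle t
        have hE : (0:ℝ) < Real.exp (-lam * t) := Real.exp_pos _
        have : G t * Real.exp (-lam * t) + gg t * (Real.exp (-lam * t) * (-lam))
            = (G t - lam * gg t) * Real.exp (-lam * t) := by ring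
        rw [this]
        apply mul_nonpos_of_nonpos_of_nonneg
        · have : G t ≤ lam * gg t := hb
          linarith
        · exact le_of_lt hE
    have hbound : ∀ t : ℝ, 0 ≤ t → gg t ≤ gg 0 * Real.exp (lam * t) := by
      intro t ht
      have h1 : h t ≤ h 0 := hanti ht
      have hE : (0:ℝ) < Real.exp (-lam * t) := Real.exp_pos _
      rw [hh] at h1
      simp only [mul_zero, neg_mul, Real.exp_zero, mul_one] at h1
      have h2 : gg t = (gg t * Real.exp (-(lam * t))) * Real.exp (lam * t) := by
        rw [mul_assoc, ← Real.exp_add]; simp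
      rw [h2]
      exact mul_le_mul_of_nonneg_right h1 (Real.exp_pos _).le
    -- the exponential bound tends to 0
    have hexp0 : Filter.Tendsto (fun t : ℝ => gg 0 * Real.exp (lam * t))
        Filter.atTop (nhds 0) := by
      have h1 : Filter.Tendsto (fun t : ℝ => lam * t) Filter.atTop Filter.atBot := by
        exact Filter.Tendsto.const_mul_atTop_of_neg hlamneg Filter.tendsto_id
      have h2 : Filter.Tendsto (fun t : ℝ => Real.exp (lam * t)) Filter.atTop (nhds 0) :=
        Real.tendsto_exp_atBot.comp h1
      simpa using h2.const_mul (gg 0)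
    have hgg0 : Filter.Tendsto gg Filter.atTop (nhds 0) := by
      apply squeeze_zero' (Filter.Eventually.of_forall fun t => by positivity) _ hexp0
      filter_upwards [Filter.eventually_ge_atTop 0] with t ht
      exact hbound t ht
    have habs0 : Filter.Tendsto (fun t => ‖v t - vs‖) Filter.atTop (nhds 0) := by
      have hsqrt : Filter.Tendsto (fun t => Real.sqrt (gg t)) Filter.atTop (nhds 0) := by
        have := (Real.continuous_sqrt.tendsto 0).comp hgg0
        simpa [Function.comp_def] using this
      have : (fun t => Real.sqrt (gg t)) = fun t => ‖v t - vs‖ := by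
        funext t
        rw [hgg]
        exact Real.sqrt_sq (norm_nonneg _)
      rwa [this] at hsqrt
    rw [tendsto_iff_norm_sub_tendsto_zero]
    simpa using habs0
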